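/- A set of quantum states {ρ_k} on a finite-dimensional Hilbert space can be perfectly broadcast by a single quantum channel (there exists a channel Λ : B(H) → B(H ⊗ H) with Tr_2 Λ(ρ_k) = ρ_k and Tr_1 Λ(ρ_k) = ρ_k for all k) if the states pairwise commute: [ρ_i, ρ_j] = 0 for all i, j. -/

import Mathlib

open Matrix Finset ComplexOrder

/-- The Choi matrix of a superoperator `Λ : B(H) → B(H ⊗ H)`. -/
noncomputable def choiMatrix {n : ℕ}
    (Λ : Matrix (Fin n) (Fin n) ℂ →ₗ[ℂ] Matrix (Fin n × Fin n) (Fin n × Fin n) ℂ) :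
    Matrix ((Fin n × Fin n) × Fin n) ((Fin n × Fin n) × Fin n) ℂ :=
  Matrix.of fun p q => Λ (Matrix.single p.2 q.2 1) p.1 q.1

open scoped ComplexConjugate

set_option maxHeartbeats 1000000

section BroadcastAux

/-- A commuting family of Hermitian matrices admits a joint orthonormal eigenbasis. -/
private lemma exists_joint_eigenbasis {n : ℕ} {ι : Type*}
    (ρ : ι → Matrix (Fin n) (Fin n) ℂ)
    (hherm : ∀ k, (ρ k).IsHermitian)
    (hcomm : ∀ i j, ρ i * ρ j = ρ j * ρ i) :
    ∃ v : Fin n → Fin n → ℂ,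
      (∀ m m', ∑ c, conj (v m c) * v m' c = if m = m' then 1 else 0) ∧
      (∀ k m, ∃ μ : ℂ, (ρ k) *ᵥ v m = μ • v m) := by
  classical
  set T : ι → Module.End ℂ (EuclideanSpace ℂ (Fin n)) :=
    fun k => Matrix.toEuclideanLin (ρ k) with hT
  have hmul : ∀ A B : Matrix (Fin n) (Fin n) ℂ,
      Matrix.toEuclideanLin (A * B) = Matrix.toEuclideanLin A ∘ₗ Matrix.toEuclideanLin B := by
    intro A B
    ext x
    simp [Matrix.toEuclideanLin_apply, Matrix.mulVec_mulVec]
  have hsym : ∀ k, (T k : EuclideanSpace ℂ (Fin n) →ₗ[ℂ] EuclideanSpace ℂ (Fin n)).IsSymmetric :=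
    fun k => Matrix.isHermitian_iff_isSymmetric.mp (hherm k)
  have hcom : Pairwise (Function.onFun Commute T) := by
    intro i j _
    show T i * T j = T j * T i
    simp only [hT, Module.End.mul_eq_comp, ← hmul, hcomm i j]
  have htop : ⨆ χ : ι → ℂ, ⨅ k, Module.End.eigenspace (T k) (χ k) = ⊤ :=
    LinearMap.IsSymmetric.iSup_iInf_eq_top_of_commute hsym hcom
  have hcpt := (Submodule.fg_iff_compact (⊤ : Submodule ℂ (EuclideanSpace ℂ (Fin n)))).mp
    (IsNoetherian.noetherian ⊤)
  obtain ⟨s, hs⟩ := CompleteLattice.IsCompactElement.exists_finset_of_le_iSup _ hcpt _ htop.ge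
  have horth := (LinearMap.IsSymmetric.orthogonalFamily_iInf_eigenspaces hsym).comp
    (Subtype.coe_injective (p := (· ∈ s)))
  have hint : DirectSum.IsInternal
      (fun χ : {χ : ι → ℂ // χ ∈ s} => ⨅ k, Module.End.eigenspace (T k) (χ.1 k)) := by
    rw [horth.isInternal_iff]
    rw [Submodule.orthogonal_eq_bot_iff]
    have he : (⨆ i ∈ s, ⨅ k, Module.End.eigenspace (T k) (i k))
        = ⨆ g : {χ : ι → ℂ // χ ∈ s}, ⨅ k, Module.End.eigenspace (T k) (g.1 k) := by
      rw [iSup_subtype']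
    exact le_antisymm le_top (he ▸ hs)
  have hrank : Module.finrank ℂ (EuclideanSpace ℂ (Fin n)) = n := finrank_euclideanSpace_fin
  set b := hint.subordinateOrthonormalBasis hrank horth with hb
  refine ⟨fun m c => b m c, ?_, ?_⟩
  · intro m m'
    have := (orthonormal_iff_ite (𝕜 := ℂ)).mp b.orthonormal m m'
    rw [PiLp.inner_apply] at this
    simpa [mul_comm] using this
  · intro k m
    have hmem := hint.subordinateOrthonormalBasis_subordinate hrank m horth
    have hk : b m ∈ Module.End.eigenspace (T k)
        ((hint.subordinateOrthonormalBasisIndex hrank m horth).1 k) := by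
      exact (Submodule.mem_iInf _).mp hmem k
    rw [Module.End.mem_eigenspace_iff] at hk
    refine ⟨(hint.subordinateOrthonormalBasisIndex hrank m horth).1 k, ?_⟩
    have h2 : T k (b m) = (WithLp.equiv 2 _).symm ((ρ k) *ᵥ (WithLp.equiv 2 _) (b m)) :=
      Matrix.toEuclideanLin_apply _ _
    rw [hk] at h2
    simpa using congrArg WithLp.ofLp h2.symm

/-- The measure-and-prepare broadcasting channel associated to a family of vectors `v`. -/
private noncomputable def broadcastMap {n : ℕ} (v : Fin n → Fin n → ℂ) :
    Matrix (Fin n) (Fin n) ℂ →ₗ[ℂ] Matrix (Fin n × Fin n) (Fin n × Fin n) ℂ where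
  toFun X := Matrix.of fun p q =>
    ∑ m, (∑ c, ∑ c', conj (v m c) * X c c' * v m c') *
      (v m p.1 * v m p.2 * conj (v m q.1) * conj (v m q.2))
  map_add' X Y := by
    ext p q
    simp only [Matrix.of_apply, Matrix.add_apply]
    rw [← Finset.sum_add_distrib]
    refine Finset.sum_congr rfl fun m _ => ?_
    rw [← add_mul]
    congr 1
    rw [← Finset.sum_add_distrib]
    refine Finset.sum_congr rfl fun c _ => ?_
    rw [← Finset.sum_add_distrib]
    refine Finset.sum_congr rfl fun c' _ => ?_
    ring
  map_smul' a X := by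
    ext p q
    simp only [Matrix.of_apply, Matrix.smul_apply, smul_eq_mul, RingHom.id_apply]
    rw [Finset.mul_sum]
    refine Finset.sum_congr rfl fun m _ => ?_
    have h : (∑ c, ∑ c', conj (v m c) * (a * X c c') * v m c')
        = a * ∑ c, ∑ c', conj (v m c) * X c c' * v m c' := by
      rw [Finset.mul_sum]
      refine Finset.sum_congr rfl fun c _ => ?_
      rw [Finset.mul_sum]
      refine Finset.sum_congr rfl fun c' _ => ?_
      ring
    rw [h]
    ring

private lemma broadcastMap_apply {n : ℕ} (v : Fin n → Fin n → ℂ) (X : Matrix (Fin n) (Fin n) ℂ)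
    (p q : Fin n × Fin n) :
    broadcastMap v X p q = ∑ m, (∑ c, ∑ c', conj (v m c) * X c c' * v m c') *
      (v m p.1 * v m p.2 * conj (v m q.1) * conj (v m q.2)) := rfl

/-- Completeness relation for an orthonormal basis of column vectors. -/
private lemma complete_of_on {n : ℕ} (v : Fin n → Fin n → ℂ)
    (h : ∀ m m', ∑ c, conj (v m c) * v m' c = if m = m' then 1 else 0) :
    ∀ c c', ∑ m, v m c * conj (v m c') = if c = c' then 1 else 0 := by
  classical
  set U : Matrix (Fin n) (Fin n) ℂ := Matrix.of fun c m => v m c with hU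
  have h1 : Uᴴ * U = 1 := by
    ext m m'
    simp only [Matrix.mul_apply, Matrix.conjTranspose_apply, hU, Matrix.of_apply,
      Matrix.one_apply]
    simpa using h m m'
  have h2 : U * Uᴴ = 1 := mul_eq_one_comm.mp h1
  intro c c'
  have h3 : (U * Uᴴ) c c' = (1 : Matrix (Fin n) (Fin n) ℂ) c c' := by rw [h2]
  simpa [Matrix.mul_apply, Matrix.conjTranspose_apply, hU, Matrix.one_apply] using h3

private lemma hcompl'_of_on {n : ℕ} (v : Fin n → Fin n → ℂ)
    (hon : ∀ m m', ∑ c, conj (v m c) * v m' c = if m = m' then 1 else 0) :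
    ∀ c c', ∑ m, conj (v m c) * v m c' = if c = c' then 1 else 0 := by
  intro c c'
  calc ∑ m, conj (v m c) * v m c' = ∑ m, v m c' * conj (v m c) :=
        Finset.sum_congr rfl fun m _ => by ring
    _ = if c' = c then 1 else 0 := complete_of_on v hon c' c
    _ = if c = c' then 1 else 0 := by
        by_cases h : c = c'
        · subst h; simp
        · rw [if_neg h, if_neg (Ne.symm h)]

private lemma hN_of_on {n : ℕ} (v : Fin n → Fin n → ℂ)
    (hon : ∀ m m', ∑ c, conj (v m c) * v m' c = if m = m' then 1 else 0) :
    ∀ m, ∑ c, v m c * conj (v m c) = (1 : ℂ) := by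
  intro m
  have h := hon m m
  rw [if_pos rfl] at h
  rw [← h]
  exact Finset.sum_congr rfl fun c _ => by ring

private lemma trace_broadcast {n : ℕ} (v : Fin n → Fin n → ℂ)
    (hon : ∀ m m', ∑ c, conj (v m c) * v m' c = if m = m' then 1 else 0)
    (X : Matrix (Fin n) (Fin n) ℂ) :
    (broadcastMap v X).trace = X.trace := by
  classical
  have hN := hN_of_on v hon
  have hcompl' := hcompl'_of_on v hon
  have hsum : ∀ m, (∑ p : Fin n × Fin n,
      v m p.1 * v m p.2 * conj (v m p.1) * conj (v m p.2)) = 1 := by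
    intro m
    rw [Fintype.sum_prod_type]
    calc ∑ a, ∑ b, v m a * v m b * conj (v m a) * conj (v m b)
        = ∑ a, (v m a * conj (v m a)) * ∑ b, v m b * conj (v m b) := by
          refine Finset.sum_congr rfl fun a _ => ?_
          rw [Finset.mul_sum]
          exact Finset.sum_congr rfl fun b _ => by ring
      _ = ∑ a, (v m a * conj (v m a)) * 1 := by simp only [hN]
      _ = 1 := by
          simp only [mul_one]
          exact hN m
  calc (broadcastMap v X).trace
      = ∑ p : Fin n × Fin n, ∑ m, (∑ c, ∑ c', conj (v m c) * X c c' * v m c') *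
          (v m p.1 * v m p.2 * conj (v m p.1) * conj (v m p.2)) := by
        simp [Matrix.trace, Matrix.diag, broadcastMap_apply]
    _ = ∑ m, ∑ p : Fin n × Fin n, (∑ c, ∑ c', conj (v m c) * X c c' * v m c') *
          (v m p.1 * v m p.2 * conj (v m p.1) * conj (v m p.2)) := Finset.sum_comm
    _ = ∑ m, (∑ c, ∑ c', conj (v m c) * X c c' * v m c') *
          (∑ p : Fin n × Fin n, v m p.1 * v m p.2 * conj (v m p.1) * conj (v m p.2)) := by
        exact Finset.sum_congr rfl fun m _ => (Finset.mul_sum _ _ _).symm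
    _ = ∑ m, ∑ c, ∑ c', conj (v m c) * X c c' * v m c' := by
        simp only [hsum, mul_one]
    _ = ∑ c, ∑ c', (∑ m, conj (v m c) * v m c') * X c c' := by
        rw [Finset.sum_comm]
        refine Finset.sum_congr rfl fun c _ => ?_
        rw [Finset.sum_comm]
        refine Finset.sum_congr rfl fun c' _ => ?_
        rw [Finset.sum_mul]
        exact Finset.sum_congr rfl fun m _ => by ring
    _ = ∑ c, X c c := by
        simp only [hcompl', ite_mul, one_mul, zero_mul]
        exact Finset.sum_congr rfl fun c _ => by rw [Finset.sum_ite_eq]; simp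
    _ = X.trace := rfl

private lemma key_marginal {n : ℕ} (v : Fin n → Fin n → ℂ)
    (hon : ∀ m m', ∑ c, conj (v m c) * v m' c = if m = m' then 1 else 0)
    (ρ : Matrix (Fin n) (Fin n) ℂ)
    (heig : ∀ m, ∃ μ : ℂ, ρ *ᵥ v m = μ • v m) (i j : Fin n) :
    ∑ m, (∑ c, ∑ c', conj (v m c) * ρ c c' * v m c') * (v m i * conj (v m j)) = ρ i j := by
  classical
  have hcompl := complete_of_on v hon
  have hφ : ∀ m, (∑ c, ∑ c', conj (v m c) * ρ c c' * v m c') * v m i = (ρ *ᵥ v m) i := by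
    intro m
    obtain ⟨μ, hμ⟩ := heig m
    have h1 : ∀ c, ∑ c', ρ c c' * v m c' = μ * v m c := by
      intro c
      have := congrFun hμ c
      simpa [Matrix.mulVec, dotProduct] using this
    have h2 : (∑ c, ∑ c', conj (v m c) * ρ c c' * v m c') = μ := by
      calc ∑ c, ∑ c', conj (v m c) * ρ c c' * v m c'
          = ∑ c, conj (v m c) * (∑ c', ρ c c' * v m c') := by
            refine Finset.sum_congr rfl fun c _ => ?_
            rw [Finset.mul_sum]
            exact Finset.sum_congr rfl fun c' _ => by ring
        _ = ∑ c, conj (v m c) * (μ * v m c) := by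
            exact Finset.sum_congr rfl fun c _ => by rw [h1 c]
        _ = μ * ∑ c, conj (v m c) * v m c := by
            rw [Finset.mul_sum]
            exact Finset.sum_congr rfl fun c _ => by ring
        _ = μ := by rw [hon m m]; simp
    rw [h2]
    have := congrFun hμ i
    simp only [Pi.smul_apply, smul_eq_mul] at this
    rw [this]
  calc ∑ m, (∑ c, ∑ c', conj (v m c) * ρ c c' * v m c') * (v m i * conj (v m j))
      = ∑ m, ((∑ c, ∑ c', conj (v m c) * ρ c c' * v m c') * v m i) * conj (v m j) := by
        exact Finset.sum_congr rfl fun m _ => by ring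
    _ = ∑ m, (ρ *ᵥ v m) i * conj (v m j) := by
        exact Finset.sum_congr rfl fun m _ => by rw [hφ m]
    _ = ∑ m, ∑ c, ρ i c * v m c * conj (v m j) := by
        refine Finset.sum_congr rfl fun m _ => ?_
        simp only [Matrix.mulVec, dotProduct]
        rw [Finset.sum_mul]
    _ = ∑ c, ρ i c * ∑ m, v m c * conj (v m j) := by
        rw [Finset.sum_comm]
        refine Finset.sum_congr rfl fun c _ => ?_
        rw [Finset.mul_sum]
        exact Finset.sum_congr rfl fun m _ => by ring
    _ = ρ i j := by
        simp only [hcompl]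
        simp

private lemma choi_psd {n : ℕ} (v : Fin n → Fin n → ℂ) :
    (choiMatrix (broadcastMap v)).PosSemidef := by
  classical
  have hstd : ∀ (m : Fin n) (c c' : Fin n),
      (∑ e, ∑ e', conj (v m e) * Matrix.single c c' (1:ℂ) e e' * v m e')
        = conj (v m c) * v m c' := by
    intro m c c'
    rw [Finset.sum_eq_single c]
    · rw [Finset.sum_eq_single c']
      · simp [Matrix.single]
      · intro b _ hb
        have hb' : ¬(c' = b) := fun h => hb h.symm
        simp [Matrix.single, hb']
      · simp
    · intro b _ hb
      apply Finset.sum_eq_zero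
      intro e' _
      have hb' : ¬(c = b) := fun h => hb h.symm
      simp [Matrix.single, hb']
    · simp
  have hchoi : choiMatrix (broadcastMap v) = ∑ m,
      (Matrix.replicateRow Unit (star fun pc : (Fin n × Fin n) × Fin n =>
        v m pc.1.1 * v m pc.1.2 * conj (v m pc.2)))ᴴ *
      (Matrix.replicateRow Unit (star fun pc : (Fin n × Fin n) × Fin n =>
        v m pc.1.1 * v m pc.1.2 * conj (v m pc.2))) := by
    ext p q
    simp only [choiMatrix, Matrix.of_apply, broadcastMap_apply, Matrix.sum_apply]
    refine Finset.sum_congr rfl fun m _ => ?_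
    rw [hstd]
    simp only [Matrix.mul_apply, Matrix.conjTranspose_apply, Matrix.replicateRow_apply, Pi.star_apply,
      Finset.univ_unique, Finset.sum_singleton, star_mul', star_star, starRingEnd_apply]
    ring
  rw [hchoi]
  exact Finset.sum_induction _ _ (fun a b ha hb => ha.add hb) Matrix.PosSemidef.zero
    (fun m _ => Matrix.posSemidef_conjTranspose_mul_self _)

end BroadcastAux

/-- A family of pairwise commuting density operators can be perfectly broadcast:
there is a completely positive (positive semidefinite Choi matrix) trace-preserving
map `Λ : B(H) → B(H ⊗ H)` both of whose marginals reproduce each `ρ k`. -/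
theorem commuting_states_broadcastable {n : ℕ} {ι : Type*}
    (ρ : ι → Matrix (Fin n) (Fin n) ℂ)
    (hpos : ∀ k, (ρ k).PosSemidef) (htr : ∀ k, (ρ k).trace = 1)
    (hcomm : ∀ i j, ρ i * ρ j = ρ j * ρ i) :
    ∃ Λ : Matrix (Fin n) (Fin n) ℂ →ₗ[ℂ] Matrix (Fin n × Fin n) (Fin n × Fin n) ℂ,
      (choiMatrix Λ).PosSemidef ∧
      (∀ X : Matrix (Fin n) (Fin n) ℂ, (Λ X).trace = X.trace) ∧
      (∀ k, Matrix.of (fun i j => ∑ b : Fin n, Λ (ρ k) (i, b) (j, b)) = ρ k) ∧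
      (∀ k, Matrix.of (fun i j => ∑ a : Fin n, Λ (ρ k) (a, i) (a, j)) = ρ k) := by
  classical
  obtain ⟨v, hon, heig⟩ := exists_joint_eigenbasis ρ (fun k => (hpos k).isHermitian) hcomm
  have hN := hN_of_on v hon
  refine ⟨broadcastMap v, choi_psd v, trace_broadcast v hon, ?_, ?_⟩
  · intro k
    ext i j
    simp only [Matrix.of_apply]
    calc ∑ b, broadcastMap v (ρ k) (i, b) (j, b)
        = ∑ b, ∑ m, (∑ c, ∑ c', conj (v m c) * ρ k c c' * v m c') *
            (v m i * v m b * conj (v m j) * conj (v m b)) := by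
          exact Finset.sum_congr rfl fun b _ => broadcastMap_apply v (ρ k) (i, b) (j, b)
      _ = ∑ m, ∑ b, (∑ c, ∑ c', conj (v m c) * ρ k c c' * v m c') *
            (v m i * v m b * conj (v m j) * conj (v m b)) := Finset.sum_comm
      _ = ∑ m, ((∑ c, ∑ c', conj (v m c) * ρ k c c' * v m c') * (v m i * conj (v m j))) *
            (∑ b, v m b * conj (v m b)) := by
          refine Finset.sum_congr rfl fun m _ => ?_
          rw [Finset.mul_sum]
          exact Finset.sum_congr rfl fun b _ => by ring
      _ = ∑ m, (∑ c, ∑ c', conj (v m c) * ρ k c c' * v m c') * (v m i * conj (v m j)) := by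
          simp only [hN, mul_one]
      _ = ρ k i j := key_marginal v hon (ρ k) (heig k) i j
  · intro k
    ext i j
    simp only [Matrix.of_apply]
    calc ∑ a, broadcastMap v (ρ k) (a, i) (a, j)
        = ∑ a, ∑ m, (∑ c, ∑ c', conj (v m c) * ρ k c c' * v m c') *
            (v m a * v m i * conj (v m a) * conj (v m j)) := by
          exact Finset.sum_congr rfl fun a _ => broadcastMap_apply v (ρ k) (a, i) (a, j)
      _ = ∑ m, ∑ a, (∑ c, ∑ c', conj (v m c) * ρ k c c' * v m c') *
            (v m a * v m i * conj (v m a) * conj (v m j)) := Finset.sum_comm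
      _ = ∑ m, ((∑ c, ∑ c', conj (v m c) * ρ k c c' * v m c') * (v m i * conj (v m j))) *
            (∑ a, v m a * conj (v m a)) := by
          refine Finset.sum_congr rfl fun m _ => ?_
          rw [Finset.mul_sum]
          exact Finset.sum_congr rfl fun a _ => by ring
      _ = ∑ m, (∑ c, ∑ c', conj (v m c) * ρ k c c' * v m c') * (v m i * conj (v m j)) := by
          simp only [hN, mul_one]
      _ = ρ k i j := key_marginal v hon (ρ k) (heig k) i j
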